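/- Let v_1,...,v_m ∈ ℤⁿ be vectors contained in {±e'_1,...,±e'_n} for some ℝ-basis {e'_1,...,e'_n} of ℝⁿ consisting of integer vectors, and suppose the configuration is 2-regular: for every maximal linearly independent subset, the quotient of ℤⁿ by the subgroup it generates is 2-torsion. Then for every odd integer q ≥ 3, every class in (1/q)ℤⁿ/ℤⁿ has a representative u ∈ (1/q)ℤⁿ with |⟨u, v_j⟩| < 1 for all j. -/

import Mathlib

/-- Key arithmetic lemma: for odd `q ≥ 3` and `r = (1-q)*z`, the rational `r/q` is
never an odd integer, so the nearest even integer is at distance `< 1`. -/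
lemma stmt6_aux (q : ℕ) (hq : 3 ≤ q) (hodd : Odd q) (z : ℤ) :
    |(((1 - (q:ℤ)) * z : ℤ) : ℝ) / q - 2 * (round ((((1 - (q:ℤ)) * z : ℤ) : ℝ) / (2 * q)) : ℤ)| < 1 := by
  have hq0 : (q : ℝ) ≠ 0 := by positivity
  have hqz : (q : ℤ) ≠ 0 := by positivity
  set r : ℤ := (1 - (q:ℤ)) * z with hr
  set w : ℤ := round ((r : ℝ) / (2 * q)) with hw
  have hle : |(r : ℝ) / q - 2 * w| ≤ 1 := by
    have h1 : |(r : ℝ) / (2 * q) - w| ≤ 1 / 2 := abs_sub_round _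
    have h2 : (r : ℝ) / q - 2 * w = 2 * ((r : ℝ) / (2 * q) - w) := by
      field_simp
    rw [h2, abs_mul, abs_two]
    linarith
  rcases lt_or_eq_of_le hle with h | h
  · exact h
  · exfalso
    -- |r/q - 2w| = 1, so r/q = 2w ± 1, an odd integer: contradiction.
    have hcase : (r : ℝ) / q - 2 * w = 1 ∨ (r : ℝ) / q - 2 * w = -1 := by
      rcases (abs_eq (by norm_num : (0:ℝ) ≤ 1)).mp h with h' | h'
      · exact Or.inl h'
      · exact Or.inr h'
    have hoq : Odd (q : ℤ) := by exact_mod_cast hodd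
    obtain ⟨ε, hε, heq⟩ : ∃ ε : ℤ, Odd ε ∧ (r : ℝ) = q * (2 * w + ε) := by
      rcases hcase with h' | h'
      · exact ⟨1, odd_one, by field_simp at h' ⊢; push_cast; linarith⟩
      · exact ⟨-1, by decide, by field_simp at h' ⊢; push_cast; linarith⟩
    have heqz : r = q * (2 * w + ε) := by exact_mod_cast heq
    -- q ∣ r = (1-q)*z implies q ∣ z
    have hdvd : (q : ℤ) ∣ z := by
      have h1 : (q : ℤ) ∣ r := ⟨2 * w + ε, heqz⟩
      have h2 : z = r + q * z := by rw [hr]; ring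
      rw [h2]
      exact dvd_add h1 (dvd_mul_right _ _)
    obtain ⟨u, hu⟩ := hdvd
    have : (1 - (q:ℤ)) * u = 2 * w + ε := by
      apply mul_left_cancel₀ hqz
      rw [← heqz, hr, hu]; ring
    have heven : Even ((1 - (q:ℤ)) * u) := (Odd.sub_odd odd_one hoq).mul_right u
    rw [this] at heven
    have hoddw : Odd (2 * w + ε) := (even_two_mul w).add_odd hε
    exact (Int.not_odd_iff_even.mpr heven) hoddw

theorem stmt6 (n m : ℕ) (v : Fin m → Fin n → ℤ)
    (e' : Fin n → Fin n → ℤ)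
    (hbasis : LinearIndependent ℝ (fun i => fun k => (e' i k : ℝ)))
    (hsub : ∀ j, ∃ i, v j = e' i ∨ v j = -e' i)
    (h2reg : ∀ s : Finset (Fin m),
      LinearIndependent ℝ (fun j : s => fun i => (v j i : ℝ)) →
      (∀ j ∉ s, ¬ LinearIndependent ℝ
        (fun j' : (insert j s : Finset (Fin m)) => fun i => (v j' i : ℝ))) →
      ∀ x : Fin n → ℤ, (2 : ℤ) • x ∈ Submodule.span ℤ (v '' s))
    (q : ℕ) (hq : 3 ≤ q) (hodd : Odd q) :
    ∀ a : Fin n → ℝ, (∀ i, ∃ k : ℤ, a i = (k : ℝ) / q) →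
      ∃ x : Fin n → ℤ, ∀ j, |∑ i, (a i - (x i : ℝ)) * (v j i : ℝ)| < 1 := by
  classical
  intro a ha
  have hq0 : (q : ℝ) ≠ 0 := by positivity
  -- Step 1: a maximal-cardinality linearly independent subset
  set P : Finset (Fin m) → Prop :=
    fun s => LinearIndependent ℝ (fun j : s => fun i => (v j i : ℝ)) with hP
  have hPempty : P ∅ := by
    rw [hP]
    exact linearIndependent_empty_type
  obtain ⟨s, hsmem, hsmax⟩ :=
    Finset.exists_max_image ((Finset.univ : Finset (Finset (Fin m))).filter P)
      Finset.card ⟨∅, by simp [hPempty]⟩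
  have hsP : P s := (Finset.mem_filter.mp hsmem).2
  have hins : ∀ j ∉ s, ¬ P (insert j s) := by
    intro j hj hPj
    have := hsmax (insert j s) (by simp [hPj])
    rw [Finset.card_insert_of_notMem hj] at this
    omega
  have h2 := h2reg s hsP hins
  -- Step 2: 2•(standard basis vectors) lie in the ℤ-span of the e'ᵢ
  have hspan : ∀ x : Fin n → ℤ, (2:ℤ) • x ∈ Submodule.span ℤ (Set.range e') := by
    intro x
    refine Submodule.span_le.mpr ?_ (h2 x)
    rintro y ⟨j, _, rfl⟩
    obtain ⟨i, hi | hi⟩ := hsub j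
    · exact hi ▸ Submodule.subset_span ⟨i, rfl⟩
    · rw [hi]
      exact Submodule.neg_mem _ (Submodule.subset_span ⟨i, rfl⟩)
  have hD : ∀ k : Fin n, ∃ d : Fin n → ℤ,
      ∑ i, d i • e' i = (2:ℤ) • Pi.single k 1 := by
    intro k
    exact (Submodule.mem_span_range_iff_exists_fun ℤ).mp (hspan (Pi.single k 1))
  choose D hDeq using hD
  -- entrywise: ∑ i, D k i * e' i t = if k = t then 2 else 0
  have hDE : ∀ k t : Fin n, ∑ i, D k i * e' i t = if k = t then 2 else 0 := by
    intro k t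
    have := congrFun (hDeq k) t
    simp only [Finset.sum_apply, Pi.smul_apply, smul_eq_mul, Pi.single_apply] at this
    rw [this]
    rcases eq_or_ne k t with h | h
    · simp [h]
    · simp [h, h.symm]
  -- Step 3: matrix identity over ℝ, then E * D = 2 • 1
  set E : Matrix (Fin n) (Fin n) ℝ := Matrix.of (fun i t => (e' i t : ℝ)) with hE
  set Dm : Matrix (Fin n) (Fin n) ℝ := Matrix.of (fun k i => (D k i : ℝ)) with hDm
  have hDmE : Dm * E = (2:ℝ) • 1 := by
    ext k t
    rw [Matrix.mul_apply]
    have h1 : ∑ i, Dm k i * E i t = ((∑ i, D k i * e' i t : ℤ) : ℝ) := by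
      push_cast
      simp [hDm, hE]
    rw [h1, hDE k t]
    rcases eq_or_ne k t with h | h <;> simp [h, Matrix.one_apply]
  have hEDm : E * Dm = (2:ℝ) • 1 := by
    have h1 : ((2:ℝ)⁻¹ • Dm) * E = 1 := by
      rw [Matrix.smul_mul, hDmE, smul_smul]
      norm_num
    have h2 : E * ((2:ℝ)⁻¹ • Dm) = 1 := mul_eq_one_comm.mp h1
    calc E * Dm = (2:ℝ) • (E * ((2:ℝ)⁻¹ • Dm)) := by
          rw [Matrix.mul_smul, smul_smul]; norm_num
      _ = (2:ℝ) • 1 := by rw [h2]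
  have hED : ∀ i j : Fin n, ∑ t, (e' i t : ℝ) * (D t j : ℝ) = if i = j then 2 else 0 := by
    intro i j
    have := congrFun (congrFun hEDm i) j
    rw [Matrix.mul_apply] at this
    simp only [hDm, hE, Matrix.of_apply, Matrix.smul_apply, Matrix.one_apply] at this
    rw [this]
    by_cases h : i = j <;> simp [h]
  -- Step 4: construction
  choose k hk using ha
  set z : Fin n → ℤ := fun i => ∑ t, k t * e' i t with hz
  set r : Fin n → ℤ := fun i => (1 - (q:ℤ)) * z i with hrdef
  set w : Fin n → ℤ := fun i => round ((r i : ℝ) / (2 * q)) with hwdef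
  refine ⟨fun t => k t + ∑ j, D t j * w j, ?_⟩
  -- core computation: the pairing with e' i equals r i / q - 2 * w i
  have hkey : ∀ i : Fin n,
      ∑ t, (a t - ((k t + ∑ j, D t j * w j : ℤ) : ℝ)) * (e' i t : ℝ)
        = (r i : ℝ) / q - 2 * (w i : ℝ) := by
    intro i
    have hsum1 : ∑ t, a t * (e' i t : ℝ) = (z i : ℝ) / q := by
      rw [hz]
      push_cast
      rw [Finset.sum_div]
      refine Finset.sum_congr rfl fun t _ => ?_
      rw [hk t]
      ring
    have hsum2 : ∑ t, ((∑ j, D t j * w j : ℤ) : ℝ) * (e' i t : ℝ) = 2 * (w i : ℝ) := by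
      push_cast
      have hre : ∀ t : Fin n, (∑ j, (D t j : ℝ) * (w j : ℝ)) * (e' i t : ℝ)
          = ∑ j, (w j : ℝ) * ((e' i t : ℝ) * (D t j : ℝ)) := by
        intro t
        rw [Finset.sum_mul]
        exact Finset.sum_congr rfl fun j _ => by ring
      rw [Finset.sum_congr rfl (fun t _ => hre t), Finset.sum_comm]
      calc ∑ j, ∑ t, (w j : ℝ) * ((e' i t : ℝ) * (D t j : ℝ))
          = ∑ j, (w j : ℝ) * (if i = j then 2 else 0) := by
            refine Finset.sum_congr rfl fun j _ => ?_
            rw [← Finset.mul_sum, hED i j]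
        _ = 2 * (w i : ℝ) := by simp [mul_comm]
    have expand : ∑ t, (a t - ((k t + ∑ j, D t j * w j : ℤ) : ℝ)) * (e' i t : ℝ)
        = (∑ t, a t * (e' i t : ℝ)) - (∑ t, ((k t : ℤ) : ℝ) * (e' i t : ℝ))
          - ∑ t, ((∑ j, D t j * w j : ℤ) : ℝ) * (e' i t : ℝ) := by
      rw [← Finset.sum_sub_distrib, ← Finset.sum_sub_distrib]
      refine Finset.sum_congr rfl fun t _ => ?_
      push_cast
      ring
    have hsum3 : ∑ t, ((k t : ℤ) : ℝ) * (e' i t : ℝ) = (z i : ℝ) := by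
      rw [hz]; push_cast; ring
    rw [expand, hsum1, hsum2, hsum3, hrdef]
    push_cast
    field_simp
  have hlt : ∀ i : Fin n, |(r i : ℝ) / q - 2 * (w i : ℝ)| < 1 := by
    intro i
    have := stmt6_aux q hq hodd (z i)
    simpa [hrdef, hwdef] using this
  intro j
  obtain ⟨i, hi | hi⟩ := hsub j
  · rw [hi]
    rw [hkey i]
    exact hlt i
  · have : ∑ t, (a t - ((k t + ∑ j, D t j * w j : ℤ) : ℝ)) * ((v j) t : ℝ)
        = -(∑ t, (a t - ((k t + ∑ j', D t j' * w j' : ℤ) : ℝ)) * (e' i t : ℝ)) := by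
      rw [hi, ← Finset.sum_neg_distrib]
      refine Finset.sum_congr rfl fun t _ => ?_
      push_cast [Pi.neg_apply]
      ring
    rw [this, abs_neg, hkey i]
    exact hlt i
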